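/- Let q = 3 and let L, L' be two stars K_{1,2} sharing their two leaves (so L ∪ L' ≅ K_{2,2}, with centers x and x' and common leaves v₀ and v_{k+1}). For every ε > 0 there exists a K_3-transformer T from L to L' such that m₂(T, V(L) ∪ V(L')) ≤ 3 + ε. Concretely, for any even integer k ≥ 1/ε, the graph T on new vertices v₁,…,v_k with edge set { v_{i−1}v_i : i ∈ [k+1] } ∪ { x v_i, x' v_i : i ∈ [k] } is such a transformer. -/

import Mathlib

/-- The edges spanned by a clique with vertex set `S`. -/
def cliqueEdges {V : Type} (S : Finset V) : Set (Sym2 V) :=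
  {f | ¬f.IsDiag ∧ ∀ v ∈ f, v ∈ S}

/-- A `K_q`-decomposition of a graph `G`. -/
def IsKqDecomp {V : Type} (q : ℕ) (G : SimpleGraph V) (𝒟 : Set (Finset V)) : Prop :=
  (∀ S ∈ 𝒟, G.IsNClique q S) ∧
  ∀ e ∈ G.edgeSet, ∃! S, S ∈ 𝒟 ∧ e ∈ cliqueEdges S

/-- The maximum rooted density `m(H,R)`. -/
noncomputable def rootedDensity {V : Type} (H : SimpleGraph V) (R : Set V) : ℝ :=
  sSup {x : ℝ | ∃ H' : H.Subgraph, (H'.verts \ R).Nonempty ∧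
    x = (H'.edgeSet.ncard : ℝ) / ((H'.verts \ R).ncard : ℝ)}

/-- The maximum 2-density `m₂(H)`. -/
noncomputable def density2 {V : Type} (H : SimpleGraph V) : ℝ :=
  sSup {x : ℝ | ∃ H' : H.Subgraph, 3 ≤ H'.verts.ncard ∧
    x = ((H'.edgeSet.ncard : ℝ) - 1) / ((H'.verts.ncard : ℝ) - 2)}

/-- The maximum rooted 2-density `m₂(H,R)`. -/
noncomputable def rootedDensity2 {V : Type} (H : SimpleGraph V) (R : Set V) : ℝ :=
  max (rootedDensity H R) (density2 H)

/-- Vertex type for the transformer: the path vertices `v₀,…,v_{k+1}`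
(as `Fin (k+2)`) together with the two star centers `x = inr 0` and
`x' = inr 1`. -/
abbrev TW (k : ℕ) := Fin (k + 2) ⊕ Fin 2

/-- The transformer graph `T`: the path `v₀ v₁ ⋯ v_{k+1}` together with all
edges from `x` and `x'` to the internal path vertices `v₁,…,v_k`. -/
def transformerT (k : ℕ) : SimpleGraph (TW k) :=
  SimpleGraph.fromRel (fun a b =>
    (∃ i : Fin (k + 1), a = Sum.inl i.castSucc ∧ b = Sum.inl i.succ) ∨
    (∃ (i : Fin (k + 2)) (c : Fin 2),
      0 < i.val ∧ i.val < k + 1 ∧ a = Sum.inr c ∧ b = Sum.inl i))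

/-- The star `K_{1,2}` with center `inr c` and leaves `v₀` and `v_{k+1}`. -/
def starK12 (k : ℕ) (c : Fin 2) : SimpleGraph (TW k) :=
  SimpleGraph.fromRel (fun a b =>
    a = Sum.inr c ∧ (b = Sum.inl 0 ∨ b = Sum.inl (Fin.last (k + 1))))

/-- The root set `V(L) ∪ V(L')`. -/
def transformerRoots (k : ℕ) : Set (TW k) :=
  {Sum.inl 0, Sum.inl (Fin.last (k + 1)), Sum.inr 0, Sum.inr 1}

/-- path vertex, clamped -/
def vtx (k n : ℕ) : TW k := Sum.inl ⟨min n (k+1), by omega⟩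

lemma vtx_inj {k n n' : ℕ} (h : n ≤ k+1) (h' : n' ≤ k+1) (e : vtx k n = vtx k n') : n = n' := by
  simp only [vtx, Sum.inl.injEq, Fin.mk.injEq] at e
  omega

lemma vtx_ne_inr {k n : ℕ} {c : Fin 2} : vtx k n ≠ Sum.inr c := by simp [vtx]

lemma inl_eq_vtx {k n : ℕ} {j : Fin (k+2)} (h : j.val = n) (hn : n ≤ k + 1) :
    (Sum.inl j : TW k) = vtx k n := by
  unfold vtx
  congr 1
  exact Fin.ext (by simp; omega)

lemma inl_zero_eq (k : ℕ) : (Sum.inl 0 : TW k) = vtx k 0 :=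
  inl_eq_vtx (by simp) (by omega)

lemma inl_last_eq (k : ℕ) : (Sum.inl (Fin.last (k+1)) : TW k) = vtx k (k+1) :=
  inl_eq_vtx (by simp) (by omega)

lemma vtx_ne_vtx {k n n' : ℕ} (h : n ≤ k+1) (h' : n' ≤ k+1) (hne : n ≠ n') :
    vtx k n ≠ vtx k n' := fun e => hne (vtx_inj h h' e)

lemma adjT_iff {k : ℕ} {a b : TW k} : (transformerT k).Adj a b ↔
    (∃ i : ℕ, i + 1 ≤ k+1 ∧ ((a = vtx k i ∧ b = vtx k (i+1)) ∨ (b = vtx k i ∧ a = vtx k (i+1)))) ∨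
    (∃ (c0 : Fin 2) (i : ℕ), 1 ≤ i ∧ i ≤ k ∧
      ((a = Sum.inr c0 ∧ b = vtx k i) ∨ (b = Sum.inr c0 ∧ a = vtx k i))) := by
  rw [transformerT, SimpleGraph.fromRel_adj]
  constructor
  · rintro ⟨hne, h | h⟩
    · rcases h with ⟨i, ha, hb⟩ | ⟨i, c, h1, h2, ha, hb⟩
      · exact Or.inl ⟨i.val, by omega, Or.inl ⟨by rw [ha]; exact inl_eq_vtx (by simp) (by omega),
          by rw [hb]; exact inl_eq_vtx (by simp) (by omega)⟩⟩
      · exact Or.inr ⟨c, i.val, by omega, by omega, Or.inl ⟨ha,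
          by rw [hb]; exact inl_eq_vtx rfl (by omega)⟩⟩
    · rcases h with ⟨i, hb, ha⟩ | ⟨i, c, h1, h2, hb, ha⟩
      · exact Or.inl ⟨i.val, by omega, Or.inr ⟨by rw [hb]; exact inl_eq_vtx (by simp) (by omega),
          by rw [ha]; exact inl_eq_vtx (by simp) (by omega)⟩⟩
      · exact Or.inr ⟨c, i.val, by omega, by omega, Or.inr ⟨hb,
          by rw [ha]; exact inl_eq_vtx rfl (by omega)⟩⟩
  · rintro (⟨i, hi, ⟨ha, hb⟩ | ⟨hb, ha⟩⟩ | ⟨c0, i, h1, h2, ⟨ha, hb⟩ | ⟨hb, ha⟩⟩)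
    · refine ⟨by rw [ha, hb]; exact vtx_ne_vtx (by omega) (by omega) (by omega),
        Or.inl (Or.inl ⟨⟨i, by omega⟩, ?_, ?_⟩)⟩
      · rw [ha]; exact (inl_eq_vtx (by simp) (by omega)).symm
      · rw [hb]; exact (inl_eq_vtx (by simp) (by omega)).symm
    · refine ⟨by rw [ha, hb]; exact vtx_ne_vtx (by omega) (by omega) (by omega),
        Or.inr (Or.inl ⟨⟨i, by omega⟩, ?_, ?_⟩)⟩
      · rw [hb]; exact (inl_eq_vtx (by simp) (by omega)).symm
      · rw [ha]; exact (inl_eq_vtx (by simp) (by omega)).symm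
    · refine ⟨by rw [ha, hb]; exact vtx_ne_inr.symm,
        Or.inl (Or.inr ⟨⟨i, by omega⟩, c0, by exact h1, by simp; omega, ha, ?_⟩)⟩
      rw [hb]; exact (inl_eq_vtx (j := ⟨i, by omega⟩) rfl (by omega)).symm
    · refine ⟨by rw [ha, hb]; exact vtx_ne_inr,
        Or.inr (Or.inr ⟨⟨i, by omega⟩, c0, by exact h1, by simp; omega, hb, ?_⟩)⟩
      rw [ha]; exact (inl_eq_vtx (j := ⟨i, by omega⟩) rfl (by omega)).symm

lemma adjS_iff {k : ℕ} {c : Fin 2} {a b : TW k} : (starK12 k c).Adj a b ↔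
    ((a = Sum.inr c ∧ (b = vtx k 0 ∨ b = vtx k (k+1))) ∨
     (b = Sum.inr c ∧ (a = vtx k 0 ∨ a = vtx k (k+1)))) := by
  rw [starK12, SimpleGraph.fromRel_adj]
  rw [inl_zero_eq, inl_last_eq]
  constructor
  · rintro ⟨hne, h | h⟩
    · exact Or.inl h
    · exact Or.inr h
  · rintro (⟨ha, hb⟩ | ⟨hb, ha⟩)
    · exact ⟨by rw [ha]; rcases hb with hb | hb <;> rw [hb] <;> exact vtx_ne_inr.symm,
        Or.inl ⟨ha, hb⟩⟩
    · exact ⟨by rw [hb]; rcases ha with h' | h' <;> rw [h'] <;> exact vtx_ne_inr,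
        Or.inr ⟨hb, ha⟩⟩

lemma T_edge_shape {k : ℕ} {e : Sym2 (TW k)} (he : e ∈ (transformerT k).edgeSet) :
    (∃ i, i + 1 ≤ k+1 ∧ e = s(vtx k i, vtx k (i+1))) ∨
    (∃ (c0 : Fin 2) (i : ℕ), 1 ≤ i ∧ i ≤ k ∧ e = s(Sum.inr c0, vtx k i)) := by
  induction e with
  | _ a b =>
    rw [SimpleGraph.mem_edgeSet, adjT_iff] at he
    rcases he with ⟨i, hi, ⟨ha, hb⟩ | ⟨hb, ha⟩⟩ | ⟨c0, i, h1, h2, ⟨ha, hb⟩ | ⟨hb, ha⟩⟩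
    · exact Or.inl ⟨i, hi, by rw [ha, hb]⟩
    · exact Or.inl ⟨i, hi, by rw [ha, hb, Sym2.eq_swap]⟩
    · exact Or.inr ⟨c0, i, h1, h2, by rw [ha, hb]⟩
    · exact Or.inr ⟨c0, i, h1, h2, by rw [ha, hb, Sym2.eq_swap]⟩

/-- charge function, with cutoff parameter `j` -/
def chg (k j : ℕ) : Sym2 (TW k) → TW k × Fin 3 :=
  Sym2.lift ⟨fun a b => match a, b with
    | Sum.inl i, Sum.inl i' => (Sum.inl (if (max i i').val < j then max i i' else min i i'), 2)
    | Sum.inr c, Sum.inl i => (Sum.inl i, c.castSucc)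
    | Sum.inl i, Sum.inr c => (Sum.inl i, c.castSucc)
    | Sum.inr _, Sum.inr _ => (Sum.inr 0, 2),
    by rintro (i | c) (i' | c') <;> simp [max_comm, min_comm]⟩

lemma vtx_eq {k n : ℕ} (h : n ≤ k + 1) : vtx k n = Sum.inl ⟨n, by omega⟩ := by
  unfold vtx
  congr 1
  exact Fin.ext (by simp; omega)

lemma chg_path {k j i : ℕ} (h : i + 1 ≤ k + 1) :
    chg k j s(vtx k i, vtx k (i+1)) = (vtx k (if i + 1 < j then i + 1 else i), 2) := by
  have h1 : vtx k i = Sum.inl ⟨i, by omega⟩ := vtx_eq (by omega)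
  have h2 : vtx k (i+1) = Sum.inl ⟨i+1, by omega⟩ := vtx_eq (by omega)
  rw [h1, h2, chg, Sym2.lift_mk]
  have hmax : max (⟨i, by omega⟩ : Fin (k+2)) ⟨i+1, by omega⟩ = ⟨i+1, by omega⟩ :=
    max_eq_right (by rw [Fin.mk_le_mk]; omega)
  have hmin : min (⟨i, by omega⟩ : Fin (k+2)) ⟨i+1, by omega⟩ = ⟨i, by omega⟩ :=
    min_eq_left (by rw [Fin.mk_le_mk]; omega)
  simp only [hmax, hmin]
  split_ifs with h'
  · rw [vtx_eq (by omega : i + 1 ≤ k + 1)]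
  · rw [vtx_eq (by omega : i ≤ k + 1)]

lemma chg_star {k j i : ℕ} {c : Fin 2} (h : i ≤ k + 1) :
    chg k j s(Sum.inr c, vtx k i) = (vtx k i, c.castSucc) := by
  rw [vtx_eq h, chg, Sym2.lift_mk]

lemma vtx_not_root {k n : ℕ} (h1 : 1 ≤ n) (h2 : n ≤ k) : vtx k n ∉ transformerRoots k := by
  intro h
  rcases h with h | h | h | h
  · rw [inl_zero_eq] at h; exact absurd (vtx_inj (by omega) (by omega) h) (by omega)
  · rw [inl_last_eq] at h; exact absurd (vtx_inj (by omega) (by omega) h) (by omega)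
  · exact vtx_ne_inr h
  · exact vtx_ne_inr h

lemma castSucc_ne_two {c : Fin 2} : (Fin.castSucc c : Fin 3) ≠ 2 := by
  intro h
  have := congrArg Fin.val h
  simp [Fin.val_two] at this
  omega

lemma ncard_prod {α β : Type*} (A : Set α) (B : Set β) : (A ×ˢ B).ncard = A.ncard * B.ncard := by
  rw [← Nat.card_coe_set_eq, ← Nat.card_coe_set_eq, ← Nat.card_coe_set_eq,
    Nat.card_congr (Equiv.Set.prod A B), Nat.card_prod]

lemma count_bound {k : ℕ} (H' : (transformerT k).Subgraph) (j : ℕ) (hj1 : 1 ≤ j) (hj2 : j ≤ k + 1)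
    (E' : Set (Sym2 (TW k))) (hE : E' ⊆ H'.edgeSet)
    (C : Finset (Fin 3)) (h2 : (2 : Fin 3) ∈ C)
    (hC : ∀ c : Fin 2, Sum.inr c ∈ H'.verts → c.castSucc ∈ C)
    (hP : ∀ i : ℕ, i + 1 ≤ k + 1 → s(vtx k i, vtx k (i+1)) ∈ E' → i ≠ j ∧ i + 1 ≠ j) :
    E'.ncard ≤ (H'.verts \ transformerRoots k).ncard * C.card := by
  classical
  -- shape facts about elements of E'
  have shape : ∀ e ∈ E',
      (∃ i, i + 1 ≤ k+1 ∧ e = s(vtx k i, vtx k (i+1)) ∧ vtx k i ∈ H'.verts ∧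
        vtx k (i+1) ∈ H'.verts) ∨
      (∃ (c0 : Fin 2) (i : ℕ), 1 ≤ i ∧ i ≤ k ∧ e = s(Sum.inr c0, vtx k i) ∧
        Sum.inr c0 ∈ H'.verts ∧ vtx k i ∈ H'.verts) := by
    intro e he
    have heH := hE he
    have heT := H'.edgeSet_subset heH
    rcases T_edge_shape heT with ⟨i, hi, rfl⟩ | ⟨c0, i, h1, h2', rfl⟩
    · rw [SimpleGraph.Subgraph.mem_edgeSet] at heH
      exact Or.inl ⟨i, hi, rfl, heH.fst_mem, heH.snd_mem⟩
    · rw [SimpleGraph.Subgraph.mem_edgeSet] at heH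
      exact Or.inr ⟨c0, i, h1, h2', rfl, heH.fst_mem, heH.snd_mem⟩
  have key := Set.ncard_le_ncard_of_injOn (chg k j)
    (t := (H'.verts \ transformerRoots k) ×ˢ (↑C : Set (Fin 3)))
    (s := E') ?_ ?_ (Set.toFinite _)
  · rwa [ncard_prod, Set.ncard_coe_finset] at key
  · -- maps to
    intro e he
    rcases shape e he with ⟨i, hi, rfl, hv1, hv2⟩ | ⟨c0, i, h1, h2', rfl, hv1, hv2⟩
    · obtain ⟨hij, hij2⟩ := hP i hi he
      rw [chg_path hi]
      constructor
      · split_ifs with h'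
        · exact ⟨hv2, vtx_not_root (by omega) (by omega)⟩
        · exact ⟨hv1, vtx_not_root (by omega) (by omega)⟩
      · simpa using h2
    · rw [chg_star (by omega)]
      exact ⟨⟨hv2, vtx_not_root h1 h2'⟩, by simpa using hC c0 hv1⟩
  · -- injective on E'
    intro e1 he1 e2 he2 heq
    rcases shape e1 he1 with ⟨i, hi, rfl, hv1, hv2⟩ | ⟨c0, i, h1, h2', rfl, hv1, hv2⟩ <;>
      rcases shape e2 he2 with ⟨i', hi', rfl, hv1', hv2'⟩ | ⟨c0', i', h1', h2'', rfl, hv1', hv2'⟩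
    · obtain ⟨ha, hb⟩ := hP i hi he1
      obtain ⟨ha', hb'⟩ := hP i' hi' he2
      rw [chg_path hi, chg_path hi'] at heq
      have := (Prod.ext_iff.mp heq).1
      have hv : (if i + 1 < j then i + 1 else i) = (if i' + 1 < j then i' + 1 else i') := by
        apply vtx_inj _ _ this <;> split_ifs <;> omega
      have : i = i' := by split_ifs at hv <;> omega
      rw [this]
    · rw [chg_path hi, chg_star (by omega)] at heq
      have := (Prod.ext_iff.mp heq).2
      exact absurd this.symm castSucc_ne_two
    · rw [chg_path hi', chg_star (by omega)] at heq
      have := (Prod.ext_iff.mp heq).2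
      exact absurd this castSucc_ne_two
    · rw [chg_star (by omega), chg_star (by omega)] at heq
      obtain ⟨hfst, hsnd⟩ := Prod.ext_iff.mp heq
      have hii : i = i' := vtx_inj (by omega) (by omega) hfst
      have hcc : c0 = c0' := Fin.castSucc_inj.mp hsnd
      rw [hii, hcc]

lemma inr_mem_roots {k : ℕ} (c : Fin 2) : (Sum.inr c : TW k) ∈ transformerRoots k := by
  fin_cases c
  · right; right; left; rfl
  · right; right; right; rfl

lemma last_mem_roots {k : ℕ} : vtx k (k+1) ∈ transformerRoots k := by
  rw [← inl_last_eq]; right; left; rfl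

lemma ncard_le_diff_singleton {α : Type*} [Fintype α] [DecidableEq α] (s : Set α) (a : α) :
    s.ncard ≤ (s \ {a}).ncard + 1 := by
  have hsub : s ⊆ (s \ {a}) ∪ {a} := by
    intro x hx
    by_cases hxa : x = a
    · exact Or.inr hxa
    · exact Or.inl ⟨hx, hxa⟩
  calc s.ncard ≤ ((s \ {a}) ∪ {a}).ncard := Set.ncard_le_ncard hsub (Set.toFinite _)
    _ ≤ (s \ {a}).ncard + ({a} : Set α).ncard := Set.ncard_union_le _ _
    _ = (s \ {a}).ncard + 1 := by rw [Set.ncard_singleton]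

lemma hP_diff {k : ℕ} (H' : (transformerT k).Subgraph) :
    ∀ i : ℕ, i + 1 ≤ k + 1 →
      s(vtx k i, vtx k (i+1)) ∈ H'.edgeSet \ {s(vtx k k, vtx k (k+1))} →
      i ≠ k + 1 ∧ i + 1 ≠ k + 1 := by
  intro i hi hmem
  refine ⟨by omega, fun hik => ?_⟩
  have : i = k := by omega
  subst this
  exact hmem.2 rfl

lemma bound_plus {k : ℕ} (H' : (transformerT k).Subgraph) :
    H'.edgeSet.ncard ≤ 3 * (H'.verts \ transformerRoots k).ncard + 1 := by
  classical
  have h1 := ncard_le_diff_singleton (α := Sym2 (TW k)) H'.edgeSet (s(vtx k k, vtx k (k+1)))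
  have h2 := count_bound H' (k+1) (by omega) (by omega)
    (H'.edgeSet \ {s(vtx k k, vtx k (k+1))}) Set.diff_subset
    Finset.univ (Finset.mem_univ _) (fun c _ => Finset.mem_univ _) (hP_diff H')
  have h3 : (Finset.univ : Finset (Fin 3)).card = 3 := by simp
  rw [h3] at h2
  omega

lemma bound_miss {k : ℕ} (H' : (transformerT k).Subgraph) (jj : ℕ) (h1 : 1 ≤ jj) (h2 : jj ≤ k)
    (hm : vtx k jj ∉ H'.verts) :
    H'.edgeSet.ncard ≤ 3 * (H'.verts \ transformerRoots k).ncard := by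
  classical
  have h := count_bound H' jj h1 (by omega) H'.edgeSet (subset_refl _)
    Finset.univ (Finset.mem_univ _) (fun c _ => Finset.mem_univ _) ?_
  · have h3 : (Finset.univ : Finset (Fin 3)).card = 3 := by simp
    rw [h3] at h
    omega
  · intro i hi hmem
    rw [SimpleGraph.Subgraph.mem_edgeSet] at hmem
    constructor
    · intro hij
      subst hij
      exact hm hmem.fst_mem
    · intro hij
      rw [← hij] at hm
      exact hm hmem.snd_mem

lemma bound_single_inr {k : ℕ} (H' : (transformerT k).Subgraph) (c0 : Fin 2)
    (hONLY : ∀ r ∈ H'.verts ∩ transformerRoots k, r = Sum.inr c0) :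
    H'.edgeSet.ncard ≤ (H'.verts \ transformerRoots k).ncard * 2 := by
  classical
  have h := count_bound H' (k+1) (by omega) (by omega) H'.edgeSet (subset_refl _)
    ({c0.castSucc, 2} : Finset (Fin 3)) (by simp) ?_ ?_
  · calc H'.edgeSet.ncard ≤ _ * ({c0.castSucc, 2} : Finset (Fin 3)).card := h
      _ ≤ _ * 2 := Nat.mul_le_mul_left _ (Finset.card_insert_le _ _ |>.trans (by simp))
  · intro c hc
    have : (Sum.inr c : TW k) = Sum.inr c0 := hONLY _ ⟨hc, inr_mem_roots c⟩
    simp only [Sum.inr.injEq] at this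
    subst this
    simp
  · intro i hi hmem
    rw [SimpleGraph.Subgraph.mem_edgeSet] at hmem
    refine ⟨by omega, fun hik => ?_⟩
    have hv : vtx k (i+1) ∈ H'.verts := hmem.snd_mem
    rw [hik] at hv
    exact vtx_ne_inr (hONLY _ ⟨hv, last_mem_roots⟩)

lemma bound_no_inr {k : ℕ} (H' : (transformerT k).Subgraph)
    (h0 : ∀ c : Fin 2, Sum.inr c ∉ H'.verts) :
    H'.edgeSet.ncard ≤ (H'.verts \ transformerRoots k).ncard + 1 := by
  classical
  have h1 := ncard_le_diff_singleton (α := Sym2 (TW k)) H'.edgeSet (s(vtx k k, vtx k (k+1)))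
  have h := count_bound H' (k+1) (by omega) (by omega)
    (H'.edgeSet \ {s(vtx k k, vtx k (k+1))}) Set.diff_subset
    ({2} : Finset (Fin 3)) (by simp) (fun c hc => absurd hc (h0 c)) (hP_diff H')
  rw [Finset.card_singleton, Nat.mul_one] at h
  omega

def triA (k : ℕ) (c : Fin 2) (i : ℕ) : Finset (TW k) := {Sum.inr c, vtx k (2*i), vtx k (2*i+1)}
def triB (k : ℕ) (c : Fin 2) (i : ℕ) : Finset (TW k) := {Sum.inr c, vtx k (2*i+1), vtx k (2*i+2)}

def DD (k : ℕ) (c : Fin 2) : Set (Finset (TW k)) :=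
  {S | (∃ i, 2*i+1 ≤ k+1 ∧ S = triA k c i) ∨ (∃ i, 2*i+2 ≤ k ∧ S = triB k (1-c) i)}

lemma adjG_star {k : ℕ} (c : Fin 2) {i : ℕ} (h1 : i ≤ k + 1) :
    (transformerT k ⊔ starK12 k c).Adj (Sum.inr c) (vtx k i) := by
  rw [SimpleGraph.sup_adj]
  rcases Nat.eq_zero_or_pos i with h | h
  · subst h
    rw [adjS_iff]
    exact Or.inr (Or.inl ⟨rfl, Or.inl rfl⟩)
  · rcases Nat.lt_or_ge i (k+1) with h' | h'
    · rw [adjT_iff]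
      exact Or.inl (Or.inr ⟨c, i, h, by omega, Or.inl ⟨rfl, rfl⟩⟩)
    · have : i = k + 1 := by omega
      subst this
      rw [adjS_iff]
      exact Or.inr (Or.inl ⟨rfl, Or.inr rfl⟩)

lemma adjG_starT {k : ℕ} (G : SimpleGraph (TW k)) (c0 : Fin 2) {i : ℕ} (h1 : 1 ≤ i) (h2 : i ≤ k) :
    (transformerT k ⊔ G).Adj (Sum.inr c0) (vtx k i) := by
  rw [SimpleGraph.sup_adj, adjT_iff]
  exact Or.inl (Or.inr ⟨c0, i, h1, h2, Or.inl ⟨rfl, rfl⟩⟩)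

lemma adjG_path {k : ℕ} (G : SimpleGraph (TW k)) {i : ℕ} (h1 : i + 1 ≤ k + 1) :
    (transformerT k ⊔ G).Adj (vtx k i) (vtx k (i+1)) := by
  rw [SimpleGraph.sup_adj, adjT_iff]
  exact Or.inl (Or.inl ⟨i, h1, Or.inl ⟨rfl, rfl⟩⟩)

lemma clique_triA {k : ℕ} (c : Fin 2) {i : ℕ} (hi : 2*i+1 ≤ k+1) :
    (transformerT k ⊔ starK12 k c).IsNClique 3 (triA k c i) := by
  rw [SimpleGraph.is3Clique_iff]
  exact ⟨Sum.inr c, vtx k (2*i), vtx k (2*i+1),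
    adjG_star c (by omega), adjG_star c (by omega), adjG_path _ (by omega), rfl⟩

lemma clique_triB {k : ℕ} (c c' : Fin 2) {i : ℕ} (hi : 2*i+2 ≤ k) :
    (transformerT k ⊔ starK12 k c').IsNClique 3 (triB k c i) := by
  rw [SimpleGraph.is3Clique_iff]
  exact ⟨Sum.inr c, vtx k (2*i+1), vtx k (2*i+2),
    adjG_starT _ c (by omega) (by omega), adjG_starT _ c (by omega) (by omega),
    adjG_path _ (by omega), rfl⟩

lemma mem_triA {k : ℕ} {c : Fin 2} {i : ℕ} {x : TW k} :
    x ∈ triA k c i ↔ x = Sum.inr c ∨ x = vtx k (2*i) ∨ x = vtx k (2*i+1) := by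
  simp [triA]

lemma mem_triB {k : ℕ} {c : Fin 2} {i : ℕ} {x : TW k} :
    x ∈ triB k c i ↔ x = Sum.inr c ∨ x = vtx k (2*i+1) ∨ x = vtx k (2*i+2) := by
  simp [triB]

lemma mem_cliqueEdges {V : Type} {S : Finset V} {a b : V} :
    s(a, b) ∈ cliqueEdges S ↔ a ≠ b ∧ a ∈ S ∧ b ∈ S := by
  simp only [cliqueEdges, Set.mem_setOf_eq, Sym2.isDiag_iff_proj_eq, Sym2.mem_iff]
  constructor
  · rintro ⟨h1, h2⟩
    exact ⟨h1, h2 a (Or.inl rfl), h2 b (Or.inr rfl)⟩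
  · rintro ⟨h1, h2, h3⟩
    exact ⟨h1, fun v hv => by rcases hv with rfl | rfl <;> assumption⟩

lemma vtx_mem_triA {k : ℕ} {c : Fin 2} {i' n : ℕ} (hi' : 2*i'+1 ≤ k+1) (hn : n ≤ k+1)
    (h : vtx k n ∈ triA k c i') : n = 2*i' ∨ n = 2*i'+1 := by
  rcases mem_triA.mp h with h | h | h
  · exact absurd h vtx_ne_inr
  · exact Or.inl (vtx_inj hn (by omega) h)
  · exact Or.inr (vtx_inj hn (by omega) h)

lemma vtx_mem_triB {k : ℕ} {c : Fin 2} {i' n : ℕ} (hi' : 2*i'+2 ≤ k) (hn : n ≤ k+1)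
    (h : vtx k n ∈ triB k c i') : n = 2*i'+1 ∨ n = 2*i'+2 := by
  rcases mem_triB.mp h with h | h | h
  · exact absurd h vtx_ne_inr
  · exact Or.inl (vtx_inj hn (by omega) h)
  · exact Or.inr (vtx_inj hn (by omega) h)

lemma inr_mem_triA {k : ℕ} {c c0 : Fin 2} {i' : ℕ} (h : (Sum.inr c0 : TW k) ∈ triA k c i') :
    c0 = c := by
  rcases mem_triA.mp h with h | h | h
  · exact Sum.inr.injEq _ _ ▸ h
  · exact absurd h.symm vtx_ne_inr
  · exact absurd h.symm vtx_ne_inr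

lemma inr_mem_triB {k : ℕ} {c c0 : Fin 2} {i' : ℕ} (h : (Sum.inr c0 : TW k) ∈ triB k c i') :
    c0 = c := by
  rcases mem_triB.mp h with h | h | h
  · exact Sum.inr.injEq _ _ ▸ h
  · exact absurd h.symm vtx_ne_inr
  · exact absurd h.symm vtx_ne_inr

lemma G_edge_shape {k : ℕ} {c : Fin 2} {e : Sym2 (TW k)}
    (he : e ∈ (transformerT k ⊔ starK12 k c).edgeSet) :
    (∃ i, i + 1 ≤ k+1 ∧ e = s(vtx k i, vtx k (i+1))) ∨
    (∃ (c0 : Fin 2) (i : ℕ), 1 ≤ i ∧ i ≤ k ∧ e = s(Sum.inr c0, vtx k i)) ∨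
    e = s(Sum.inr c, vtx k 0) ∨ e = s(Sum.inr c, vtx k (k+1)) := by
  induction e with
  | _ a b =>
    rw [SimpleGraph.mem_edgeSet, SimpleGraph.sup_adj] at he
    rcases he with he | he
    · rcases T_edge_shape ((SimpleGraph.mem_edgeSet _).mpr he) with ⟨i, hi, h⟩ | ⟨c0, i, h1, h2, h⟩
      · exact Or.inl ⟨i, hi, h⟩
      · exact Or.inr (Or.inl ⟨c0, i, h1, h2, h⟩)
    · rw [adjS_iff] at he
      rcases he with ⟨ha, hb | hb⟩ | ⟨hb, ha | ha⟩
      · exact Or.inr (Or.inr (Or.inl (by rw [ha, hb])))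
      · exact Or.inr (Or.inr (Or.inr (by rw [ha, hb])))
      · exact Or.inr (Or.inr (Or.inl (by rw [hb, ha, Sym2.eq_swap])))
      · exact Or.inr (Or.inr (Or.inr (by rw [hb, ha, Sym2.eq_swap])))

lemma decomp {k : ℕ} (hke : Even k) (c : Fin 2) :
    (∀ S ∈ DD k c, (transformerT k ⊔ starK12 k c).IsNClique 3 S) ∧
    ∀ e ∈ (transformerT k ⊔ starK12 k c).edgeSet,
      ∃! S, S ∈ DD k c ∧ e ∈ cliqueEdges S := by
  obtain ⟨m, hm⟩ := hke
  have hc : (1 - c) ≠ c := by fin_cases c <;> decide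
  constructor
  · rintro S (⟨i, hi, rfl⟩ | ⟨i, hi, rfl⟩)
    · exact clique_triA c hi
    · exact clique_triB (1-c) c hi
  · intro e he
    rcases G_edge_shape he with ⟨i, hi, rfl⟩ | ⟨c0, i, h1, h2, rfl⟩ | rfl | rfl
    · -- path edge
      rcases Nat.even_or_odd i with ⟨q, hq⟩ | ⟨q, hq⟩
      · -- i = 2q : in triA c q
        have hq' : i = 2*q := by omega
        subst hq'
        refine ⟨triA k c q, ⟨Or.inl ⟨q, by omega, rfl⟩, mem_cliqueEdges.mpr
          ⟨vtx_ne_vtx (by omega) (by omega) (by omega),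
           mem_triA.mpr (Or.inr (Or.inl rfl)), mem_triA.mpr (Or.inr (Or.inr rfl))⟩⟩, ?_⟩
        rintro S' ⟨⟨i', hi', rfl⟩ | ⟨i', hi', rfl⟩, hce⟩
        · obtain ⟨-, hx, hy⟩ := mem_cliqueEdges.mp hce
          have h1 := vtx_mem_triA hi' (by omega) hx
          have h2 := vtx_mem_triA hi' (by omega) hy
          have : i' = q := by omega
          rw [this]
        · obtain ⟨-, hx, hy⟩ := mem_cliqueEdges.mp hce
          have h1 := vtx_mem_triB hi' (by omega) hx
          have h2 := vtx_mem_triB hi' (by omega) hy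
          omega
      · -- i = 2q+1 : in triB (1-c) q
        have hq' : i = 2*q+1 := by omega
        subst hq'
        refine ⟨triB k (1-c) q, ⟨Or.inr ⟨q, by omega, rfl⟩, mem_cliqueEdges.mpr
          ⟨vtx_ne_vtx (by omega) (by omega) (by omega),
           mem_triB.mpr (Or.inr (Or.inl rfl)), mem_triB.mpr (Or.inr (Or.inr rfl))⟩⟩, ?_⟩
        rintro S' ⟨⟨i', hi', rfl⟩ | ⟨i', hi', rfl⟩, hce⟩
        · obtain ⟨-, hx, hy⟩ := mem_cliqueEdges.mp hce
          have h1 := vtx_mem_triA hi' (by omega) hx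
          have h2 := vtx_mem_triA hi' (by omega) hy
          omega
        · obtain ⟨-, hx, hy⟩ := mem_cliqueEdges.mp hce
          have h1 := vtx_mem_triB hi' (by omega) hx
          have h2 := vtx_mem_triB hi' (by omega) hy
          have : i' = q := by omega
          rw [this]
    · -- star edge (c0, i), 1 ≤ i ≤ k
      by_cases hcc : c0 = c
      · subst hcc
        rcases Nat.even_or_odd i with ⟨q, hq⟩ | ⟨q, hq⟩
        · have hq' : i = 2*q := by omega
          subst hq'
          refine ⟨triA k c0 q, ⟨Or.inl ⟨q, by omega, rfl⟩, mem_cliqueEdges.mpr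
            ⟨vtx_ne_inr.symm, mem_triA.mpr (Or.inl rfl), mem_triA.mpr (Or.inr (Or.inl rfl))⟩⟩, ?_⟩
          rintro S' ⟨⟨i', hi', rfl⟩ | ⟨i', hi', rfl⟩, hce⟩
          · obtain ⟨-, hx, hy⟩ := mem_cliqueEdges.mp hce
            have h1 := vtx_mem_triA hi' (by omega) hy
            have : i' = q := by omega
            rw [this]
          · obtain ⟨-, hx, hy⟩ := mem_cliqueEdges.mp hce
            exact absurd (inr_mem_triB hx).symm hc
        · have hq' : i = 2*q+1 := by omega
          subst hq'
          refine ⟨triA k c0 q, ⟨Or.inl ⟨q, by omega, rfl⟩, mem_cliqueEdges.mpr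
            ⟨vtx_ne_inr.symm, mem_triA.mpr (Or.inl rfl), mem_triA.mpr (Or.inr (Or.inr rfl))⟩⟩, ?_⟩
          rintro S' ⟨⟨i', hi', rfl⟩ | ⟨i', hi', rfl⟩, hce⟩
          · obtain ⟨-, hx, hy⟩ := mem_cliqueEdges.mp hce
            have h1 := vtx_mem_triA hi' (by omega) hy
            have : i' = q := by omega
            rw [this]
          · obtain ⟨-, hx, hy⟩ := mem_cliqueEdges.mp hce
            exact absurd (inr_mem_triB hx).symm hc
      · have hcc' : c0 = 1 - c := by fin_cases c0 <;> fin_cases c <;> simp_all <;> decide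
        subst hcc'
        rcases Nat.even_or_odd i with ⟨q, hq⟩ | ⟨q, hq⟩
        · -- i = 2q even, i ≥ 1 so i ≥ 2, i = 2(q-1)+2 : triB (1-c) (q-1)
          have hq' : i = 2*(q-1)+2 := by omega
          subst hq'
          refine ⟨triB k (1-c) (q-1), ⟨Or.inr ⟨q-1, by omega, rfl⟩, mem_cliqueEdges.mpr
            ⟨vtx_ne_inr.symm, mem_triB.mpr (Or.inl rfl), mem_triB.mpr (Or.inr (Or.inr rfl))⟩⟩, ?_⟩
          rintro S' ⟨⟨i', hi', rfl⟩ | ⟨i', hi', rfl⟩, hce⟩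
          · obtain ⟨-, hx, hy⟩ := mem_cliqueEdges.mp hce
            exact absurd (inr_mem_triA hx) hc
          · obtain ⟨-, hx, hy⟩ := mem_cliqueEdges.mp hce
            have h1 := vtx_mem_triB hi' (by omega) hy
            have : i' = q - 1 := by omega
            rw [this]
        · -- i = 2q+1 odd : triB (1-c) q, note i ≤ k and k even so i < k
          have hik : i < k := by omega
          have hq' : i = 2*q+1 := by omega
          subst hq'
          refine ⟨triB k (1-c) q, ⟨Or.inr ⟨q, by omega, rfl⟩, mem_cliqueEdges.mpr
            ⟨vtx_ne_inr.symm, mem_triB.mpr (Or.inl rfl), mem_triB.mpr (Or.inr (Or.inl rfl))⟩⟩, ?_⟩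
          rintro S' ⟨⟨i', hi', rfl⟩ | ⟨i', hi', rfl⟩, hce⟩
          · obtain ⟨-, hx, hy⟩ := mem_cliqueEdges.mp hce
            exact absurd (inr_mem_triA hx) hc
          · obtain ⟨-, hx, hy⟩ := mem_cliqueEdges.mp hce
            have h1 := vtx_mem_triB hi' (by omega) hy
            have : i' = q := by omega
            rw [this]
    · -- edge (inr c, v0) : triA c 0
      refine ⟨triA k c 0, ⟨Or.inl ⟨0, by omega, rfl⟩, mem_cliqueEdges.mpr
        ⟨vtx_ne_inr.symm, mem_triA.mpr (Or.inl rfl), mem_triA.mpr (Or.inr (Or.inl rfl))⟩⟩, ?_⟩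
      rintro S' ⟨⟨i', hi', rfl⟩ | ⟨i', hi', rfl⟩, hce⟩
      · obtain ⟨-, hx, hy⟩ := mem_cliqueEdges.mp hce
        have h1 := vtx_mem_triA hi' (by omega) hy
        have : i' = 0 := by omega
        rw [this]
      · obtain ⟨-, hx, hy⟩ := mem_cliqueEdges.mp hce
        exact absurd (inr_mem_triB hx).symm hc
    · -- edge (inr c, v_{k+1}) : triA c m where k = 2m
      refine ⟨triA k c m, ⟨Or.inl ⟨m, by omega, rfl⟩, mem_cliqueEdges.mpr
        ⟨vtx_ne_inr.symm, mem_triA.mpr (Or.inl rfl), ?_⟩⟩, ?_⟩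
      · have : k + 1 = 2*m+1 := by omega
        rw [this]
        exact mem_triA.mpr (Or.inr (Or.inr rfl))
      · rintro S' ⟨⟨i', hi', rfl⟩ | ⟨i', hi', rfl⟩, hce⟩
        · obtain ⟨-, hx, hy⟩ := mem_cliqueEdges.mp hce
          have h1 := vtx_mem_triA hi' (by omega) hy
          have : i' = m := by omega
          rw [this]
        · obtain ⟨-, hx, hy⟩ := mem_cliqueEdges.mp hce
          exact absurd (inr_mem_triB hx).symm hc


lemma rooted_le {k : ℕ} {ε : ℝ} (hε : 0 < ε) (hk : 1 / ε ≤ (k : ℝ)) :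
    rootedDensity (transformerT k) (transformerRoots k) ≤ 3 + ε := by
  apply Real.sSup_le _ (by positivity)
  rintro x ⟨H', hne, rfl⟩
  set t := (H'.verts \ transformerRoots k).ncard with hT
  have ht : 0 < t := (Set.ncard_pos (Set.toFinite _)).mpr hne
  have htR : (0:ℝ) < (t:ℝ) := by exact_mod_cast ht
  rw [div_le_iff₀ htR]
  by_cases hall : ∀ jj, 1 ≤ jj → jj ≤ k → vtx k jj ∈ H'.verts
  · -- all interior vertices present : t ≥ k and e ≤ 3t+1
    have himg : vtx k '' (Set.Icc 1 k) ⊆ H'.verts \ transformerRoots k := by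
      rintro _ ⟨jj, hjj, rfl⟩
      exact ⟨hall jj hjj.1 hjj.2, vtx_not_root hjj.1 hjj.2⟩
    have hkt : k ≤ t := by
      have h1 : (Set.Icc 1 k).ncard = k := by
        rw [← Finset.coe_Icc, Set.ncard_coe_finset, Nat.card_Icc]
        omega
      have h2 : (vtx k '' (Set.Icc 1 k)).ncard = (Set.Icc 1 k).ncard := by
        apply Set.ncard_image_of_injOn
        intro a ha b hb h
        rw [Set.mem_Icc] at ha hb
        exact vtx_inj (by omega) (by omega) h
      calc k = (vtx k '' (Set.Icc 1 k)).ncard := by rw [h2, h1]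
        _ ≤ t := Set.ncard_le_ncard himg (Set.toFinite _)
    have hE := bound_plus H'
    have h1 : (1:ℝ) ≤ (k:ℝ) * ε := (div_le_iff₀ hε).mp hk
    have hc1 : (H'.edgeSet.ncard : ℝ) ≤ 3 * t + 1 := by exact_mod_cast hE
    have hc2 : (k:ℝ) ≤ (t:ℝ) := by exact_mod_cast hkt
    nlinarith [mul_le_mul_of_nonneg_left hc2 hε.le]
  · push_neg at hall
    obtain ⟨jj, h1, h2, hm⟩ := hall
    have hE := bound_miss H' jj h1 h2 hm
    have hc1 : (H'.edgeSet.ncard : ℝ) ≤ 3 * t := by exact_mod_cast hE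
    nlinarith

lemma density2_le {k : ℕ} {ε : ℝ} (hε : 0 < ε) :
    density2 (transformerT k) ≤ 3 + ε := by
  apply Real.sSup_le _ (by positivity)
  rintro x ⟨H', hv3, rfl⟩
  set v := H'.verts.ncard with hV
  set t := (H'.verts \ transformerRoots k).ncard with hT
  have hv2 : (0:ℝ) < (v:ℝ) - 2 := by
    have : (3:ℝ) ≤ (v:ℝ) := by exact_mod_cast hv3
    linarith
  rw [div_le_iff₀ hv2]
  have hsplit : (H'.verts ∩ transformerRoots k).ncard + t = v :=
    Set.ncard_inter_add_ncard_diff_eq_ncard H'.verts (transformerRoots k) (Set.toFinite _)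
  -- key natural-number inequality
  have key : H'.edgeSet.ncard + 5 ≤ 3 * v := by
    by_cases hbig : 2 ≤ (H'.verts ∩ transformerRoots k).ncard
    · have hE := bound_plus H'
      omega
    · by_cases hr : ∃ c0 : Fin 2, Sum.inr c0 ∈ H'.verts
      · obtain ⟨c0, hc0⟩ := hr
        have hmem : (Sum.inr c0 : TW k) ∈ H'.verts ∩ transformerRoots k :=
          ⟨hc0, inr_mem_roots c0⟩
        have hone : (H'.verts ∩ transformerRoots k).ncard = 1 := by
          have : 0 < (H'.verts ∩ transformerRoots k).ncard :=
            (Set.ncard_pos (Set.toFinite _)).mpr ⟨_, hmem⟩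
          omega
        obtain ⟨a, ha⟩ := Set.ncard_eq_one.mp hone
        have haa : a = Sum.inr c0 := by
          rw [ha] at hmem
          exact hmem.symm
        have hONLY : ∀ r ∈ H'.verts ∩ transformerRoots k, r = Sum.inr c0 := by
          intro r hr'
          rw [ha] at hr'
          rw [hr', haa]
        have hE := bound_single_inr H' c0 hONLY
        omega
      · push_neg at hr
        have hE := bound_no_inr H' hr
        omega
  have keyR : (H'.edgeSet.ncard : ℝ) ≤ 3 * (v:ℝ) - 5 := by
    have : (H'.edgeSet.ncard : ℝ) + 5 ≤ 3 * (v:ℝ) := by exact_mod_cast key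
    linarith
  nlinarith

lemma k_ge_two {k : ℕ} {ε : ℝ} (hε : 0 < ε) (hke : Even k) (hk : 1 / ε ≤ (k : ℝ)) : 2 ≤ k := by
  have h0 : (0:ℝ) < (k:ℝ) := lt_of_lt_of_le (by positivity) hk
  have h1 : 1 ≤ k := by exact_mod_cast Nat.one_le_iff_ne_zero.mpr (by
    intro h; rw [h] at h0; simp at h0)
  obtain ⟨m, hm⟩ := hke
  omega

lemma root_cases {k : ℕ} {u : TW k} (hu : u ∈ transformerRoots k) :
    u = vtx k 0 ∨ u = vtx k (k+1) ∨ u = Sum.inr 0 ∨ u = Sum.inr 1 := by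
  rcases hu with rfl | rfl | rfl | rfl
  · exact Or.inl (inl_zero_eq k)
  · exact Or.inr (Or.inl (inl_last_eq k))
  · exact Or.inr (Or.inr (Or.inl rfl))
  · exact Or.inr (Or.inr (Or.inr rfl))

lemma root_vtx_idx {k n : ℕ} (hn : n ≤ k + 1) (h : vtx k n ∈ transformerRoots k) :
    n = 0 ∨ n = k + 1 := by
  rcases root_cases h with h' | h' | h' | h'
  · exact Or.inl (vtx_inj hn (by omega) h')
  · exact Or.inr (vtx_inj hn (by omega) h')
  · exact absurd h' vtx_ne_inr
  · exact absurd h' vtx_ne_inr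

lemma roots_indep {k : ℕ} (hk2 : 2 ≤ k) :
    ∀ u ∈ transformerRoots k, ∀ v ∈ transformerRoots k, ¬(transformerT k).Adj u v := by
  intro u hu v hv hadj
  rw [adjT_iff] at hadj
  rcases hadj with ⟨i, hi, ⟨ha, hb⟩ | ⟨hb, ha⟩⟩ | ⟨c0, i, h1, h2, ⟨ha, hb⟩ | ⟨hb, ha⟩⟩
  · have hu' := root_vtx_idx (by omega) (ha ▸ hu)
    have hv' := root_vtx_idx (by omega) (hb ▸ hv)
    omega
  · have hu' := root_vtx_idx (by omega) (hb ▸ hv)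
    have hv' := root_vtx_idx (by omega) (ha ▸ hu)
    omega
  · have := root_vtx_idx (by omega) (hb ▸ hv)
    omega
  · have := root_vtx_idx (by omega) (ha ▸ hu)
    omega

/-- For `q = 3`, stars `L = K_{1,2}` (center `x`) and `L' = K_{1,2}`
(center `x'`) sharing their two leaves: for every `ε > 0` and every even
`k ≥ 1/ε`, the concrete graph `T` (path `v₀ ⋯ v_{k+1}` whose internal vertices
are joined to `x` and `x'`) is a `K₃`-transformer from `L` to `L'` with
`m₂(T, V(L) ∪ V(L')) ≤ 3 + ε`. -/
theorem star_transformer_triangle (ε : ℝ) (hε : 0 < ε) (k : ℕ)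
    (hke : Even k) (hk : 1 / ε ≤ (k : ℝ)) :
    (∀ u ∈ transformerRoots k, ∀ v ∈ transformerRoots k,
      ¬(transformerT k).Adj u v) ∧
    (∃ 𝒟, IsKqDecomp 3 (transformerT k ⊔ starK12 k 0) 𝒟) ∧
    (∃ 𝒟, IsKqDecomp 3 (transformerT k ⊔ starK12 k 1) 𝒟) ∧
    rootedDensity2 (transformerT k) (transformerRoots k) ≤ 3 + ε := by
  have hk2 := k_ge_two hε hke hk
  refine ⟨roots_indep hk2, ⟨DD k 0, ?_⟩, ⟨DD k 1, ?_⟩, ?_⟩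
  · exact decomp hke 0
  · exact decomp hke 1
  · exact max_le (rooted_le hε hk) (density2_le hε)
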